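/- Let d be a positive integer and S ⊆ ℝ^d a finite set with at least d + 3 points whose affine span is all of ℝ^d. If T_2(S) has covering dimension at most 0 (every finite open cover of T_2(S) admits a finite open refinement by pairwise disjoint sets), then T_2(S) is a singleton: there exists a unique point p ∈ ℝ^d with T_2(S) = {p}. -/

import Mathlib

/-- The Tverberg set `T_r(S)` of a finite point set `S`: points `p` admitting a
partition of `S` into `r` pairwise disjoint parts whose convex hulls all contain `p`. -/
def TverSet {E : Type*} [AddCommGroup E] [Module ℝ E] (r : ℕ) (S : Finset E) : Set E :=
  {p | ∃ A : Fin r → Finset E,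
    (∀ i j, i ≠ j → Disjoint (A i) (A j)) ∧
    (⋃ i, (A i : Set E)) = (S : Set E) ∧
    ∀ i, p ∈ convexHull ℝ (A i : Set E)}

/-- `X` has covering dimension at most `k`: every finite open cover admits a finite
open refinement in which any `k + 2` distinct members have empty intersection. -/
def CovDimLE (X : Type*) [TopologicalSpace X] (k : ℕ) : Prop :=
  ∀ 𝒰 : Finset (Set X), (∀ U ∈ 𝒰, IsOpen U) → ⋃₀ (𝒰 : Set (Set X)) = Set.univ →
    ∃ 𝒱 : Finset (Set X), (∀ V ∈ 𝒱, IsOpen V) ∧ ⋃₀ (𝒱 : Set (Set X)) = Set.univ ∧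
      (∀ V ∈ 𝒱, ∃ U ∈ 𝒰, V ⊆ U) ∧
      ∀ 𝒮 : Finset (Set X), 𝒮 ⊆ 𝒱 → k + 2 ≤ 𝒮.card → ⋂₀ (𝒮 : Set (Set X)) = ∅



variable {d : ℕ} {S : Finset (Fin d → ℝ)}

/-- The linear map whose kernel is the space of affine dependences of `S`. -/
noncomputable def radonMap (d : ℕ) (S : Finset (Fin d → ℝ)) :
    (↥S → ℝ) →ₗ[ℝ] ((Fin d → ℝ) × ℝ) where
  toFun w := (∑ s, w s • (s : Fin d → ℝ), ∑ s, w s)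
  map_add' u v := by
    simp [add_smul, Finset.sum_add_distrib, Prod.ext_iff]
  map_smul' c u := by
    simp [smul_smul, Finset.smul_sum, Prod.ext_iff, Finset.mul_sum]

/-- The Radon point of a dependence. -/
noncomputable def radonPt (d : ℕ) (S : Finset (Fin d → ℝ)) (w : ↥S → ℝ) : Fin d → ℝ :=
  (∑ s, max (w s) 0)⁻¹ • ∑ s, max (w s) 0 • (s : Fin d → ℝ)

lemma radon_den_pos (w : ↥S → ℝ) (hsum : ∑ s, w s = 0) (hw : w ≠ 0) :
    0 < ∑ s, max (w s) 0 := by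
  have hpos : ∃ t, 0 < w t := by
    by_contra h
    push_neg at h
    apply hw
    funext t
    exact Finset.sum_eq_zero_iff_of_nonpos (fun i _ => h i) |>.mp hsum t (Finset.mem_univ t)
  obtain ⟨t, ht⟩ := hpos
  refine Finset.sum_pos' (fun i _ => le_max_right _ _) ⟨t, Finset.mem_univ t, ?_⟩
  simpa [max_eq_left ht.le] using ht

lemma radonPt_mem_tverSet (w : ↥S → ℝ) (hker : radonMap d S w = 0) (hw : w ≠ 0) :
    radonPt d S w ∈ TverSet 2 S := by
  have hsum : ∑ s, w s = 0 := by
    have := congrArg Prod.snd hker; simpa [radonMap] using this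
  have hvec : ∑ s, w s • (s : Fin d → ℝ) = 0 := by
    have := congrArg Prod.fst hker; simpa [radonMap] using this
  have hTpos : 0 < ∑ s, max (w s) 0 := radon_den_pos w hsum hw
  have hmax : ∀ s : ↥S, max (w s) 0 = if 0 < w s then w s else 0 := by
    intro s; rcases le_or_gt (w s) 0 with h | h
    · simp [max_eq_right h, not_lt.mpr h]
    · simp [max_eq_left h.le, h]
  set t0 : Finset ↥S := Finset.univ.filter (fun s => 0 < w s) with ht0
  set t1 : Finset ↥S := Finset.univ.filter (fun s => ¬ 0 < w s) with ht1
  have hT0 : ∑ s ∈ t0, w s = ∑ s, max (w s) 0 := by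
    rw [ht0, Finset.sum_filter]
    exact Finset.sum_congr rfl (fun s _ => (hmax s).symm)
  have h01 : ∑ s ∈ t0, w s + ∑ s ∈ t1, w s = 0 := by
    rw [ht0, ht1, Finset.sum_filter_add_sum_filter_not]; exact hsum
  have hT1 : ∑ s ∈ t1, (-w s) = ∑ s, max (w s) 0 := by
    have : ∑ s ∈ t1, (-w s) = -∑ s ∈ t1, w s := by simp
    rw [this]; linarith
  have hv0 : ∑ s ∈ t0, w s • (s : Fin d → ℝ) = ∑ s, max (w s) 0 • (s : Fin d → ℝ) := by
    rw [ht0, Finset.sum_filter]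
    refine Finset.sum_congr rfl (fun s _ => ?_)
    by_cases h : 0 < w s <;> simp [h, hmax s]
  have hv01 : ∑ s ∈ t0, w s • (s : Fin d → ℝ) + ∑ s ∈ t1, w s • (s : Fin d → ℝ) = 0 := by
    rw [ht0, ht1, Finset.sum_filter_add_sum_filter_not]; exact hvec
  have hv1 : ∑ s ∈ t1, (-w s) • (s : Fin d → ℝ) = ∑ s, max (w s) 0 • (s : Fin d → ℝ) := by
    have h1 : ∑ s ∈ t1, (-w s) • (s : Fin d → ℝ) = -∑ s ∈ t1, w s • (s : Fin d → ℝ) := by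
      simp
    rw [h1, ← hv0]
    exact neg_eq_of_add_eq_zero_left hv01
  set A0 : Finset (Fin d → ℝ) := t0.image Subtype.val with hA0
  have hA0S : A0 ⊆ S := by
    intro x hx; rw [hA0, Finset.mem_image] at hx; obtain ⟨s, _, rfl⟩ := hx; exact s.2
  refine ⟨![A0, S \ A0], ?_, ?_, ?_⟩
  · intro i j hij
    fin_cases i <;> fin_cases j <;>
      simp only [Matrix.cons_val_zero, Matrix.cons_val_one, Matrix.head_cons] <;>
      first
        | exact absurd rfl hij
        | exact Finset.disjoint_sdiff
        | exact Finset.disjoint_sdiff.symm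
  · have h2 : ∀ f : Fin 2 → Set (Fin d → ℝ), (⋃ i, f i) = f 0 ∪ f 1 := fun f => by
      ext x; simp [Fin.exists_fin_two]
    rw [h2]
    simp only [Matrix.cons_val_zero, Matrix.cons_val_one, Matrix.head_cons]
    rw [← Finset.coe_union, Finset.union_sdiff_of_subset hA0S]
  · intro i
    fin_cases i
    · simp only [Fin.zero_eta, Matrix.cons_val_zero]
      have hcm : t0.centerMass w Subtype.val = radonPt d S w := by
        rw [Finset.centerMass, hT0, hv0, radonPt]
      rw [← hcm]
      refine Finset.centerMass_mem_convexHull t0 (fun i hi => ?_) ?_ (fun i hi => ?_)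
      · rw [ht0] at hi; exact (Finset.mem_filter.mp hi).2.le
      · rw [hT0]; exact hTpos
      · exact Finset.mem_coe.mpr (Finset.mem_image_of_mem _ hi)
    · simp only [Fin.mk_one, Matrix.cons_val_one, Matrix.head_cons]
      have hcm : t1.centerMass (fun s => -w s) Subtype.val = radonPt d S w := by
        rw [Finset.centerMass, hT1, hv1, radonPt]
      rw [← hcm]
      refine Finset.centerMass_mem_convexHull t1 (fun i hi => ?_) ?_ (fun i hi => ?_)
      · rw [ht1] at hi
        have := not_lt.mp (Finset.mem_filter.mp hi).2
        linarith
      · rw [hT1]; exact hTpos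
      · refine Finset.mem_coe.mpr (Finset.mem_sdiff.mpr ⟨i.2, fun hx => ?_⟩)
        rw [hA0, Finset.mem_image] at hx
        obtain ⟨s, hs, hval⟩ := hx
        rw [Subtype.ext hval] at hs
        rw [ht1] at hi
        rw [ht0] at hs
        exact (Finset.mem_filter.mp hi).2 (Finset.mem_filter.mp hs).2


lemma sum_subtype_ite {d : ℕ} {M : Type*} [AddCommMonoid M] (S A : Finset (Fin d → ℝ))
    (hA : A ⊆ S) (f : (Fin d → ℝ) → M) :
    ∑ s : ↥S, (if (s : Fin d → ℝ) ∈ A then f ↑s else 0) = ∑ x ∈ A, f x := by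
  classical
  rw [Finset.sum_coe_sort S (fun x => if x ∈ A then f x else 0), Finset.sum_ite_mem,
    Finset.inter_eq_right.mpr hA]

lemma tverSet_eq_radonPt {q : Fin d → ℝ} (hq : q ∈ TverSet 2 S) :
    ∃ w : ↥S → ℝ, radonMap d S w = 0 ∧ w ≠ 0 ∧ radonPt d S w = q := by
  classical
  obtain ⟨A, hdisj, hunion, hmem⟩ := hq
  have hAS : ∀ i, A i ⊆ S := by
    intro i x hx
    have hx' : (x : Fin d → ℝ) ∈ ⋃ j, ((A j : Set (Fin d → ℝ))) := Set.mem_iUnion.mpr ⟨i, hx⟩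
    rw [hunion] at hx'
    exact hx'
  have h0 := hmem 0; rw [Finset.convexHull_eq] at h0
  obtain ⟨w0, hw0n, hw0s, hw0c⟩ := h0
  have h1 := hmem 1; rw [Finset.convexHull_eq] at h1
  obtain ⟨w1, hw1n, hw1s, hw1c⟩ := h1
  have hq0 : ∑ x ∈ A 0, w0 x • x = q := by
    rw [← hw0c, Finset.centerMass_eq_of_sum_1 _ _ hw0s]; rfl
  have hq1 : ∑ x ∈ A 1, w1 x • x = q := by
    rw [← hw1c, Finset.centerMass_eq_of_sum_1 _ _ hw1s]; rfl
  set p0 : (Fin d → ℝ) → ℝ := fun x => if x ∈ A 0 then w0 x else 0 with hp0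
  set p1 : (Fin d → ℝ) → ℝ := fun x => if x ∈ A 1 then w1 x else 0 with hp1
  set w : ↥S → ℝ := fun s => p0 ↑s - p1 ↑s with hwdef
  have hS0 : ∑ s : ↥S, p0 ↑s = 1 := by
    simp only [hp0]
    rw [sum_subtype_ite S (A 0) (hAS 0) w0, hw0s]
  have hS1 : ∑ s : ↥S, p1 ↑s = 1 := by
    simp only [hp1]
    rw [sum_subtype_ite S (A 1) (hAS 1) w1, hw1s]
  have hV0 : ∑ s : ↥S, p0 ↑s • (s : Fin d → ℝ) = q := by
    simp only [hp0]
    calc ∑ s : ↥S, (if (s : Fin d → ℝ) ∈ A 0 then w0 ↑s else 0) • (s : Fin d → ℝ)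
        = ∑ s : ↥S, (if (s : Fin d → ℝ) ∈ A 0 then w0 ↑s • (s : Fin d → ℝ) else 0) := by
          refine Finset.sum_congr rfl fun s _ => ?_
          split <;> simp
      _ = ∑ x ∈ A 0, w0 x • x := sum_subtype_ite S (A 0) (hAS 0) (fun x => w0 x • x)
      _ = q := hq0
  have hV1 : ∑ s : ↥S, p1 ↑s • (s : Fin d → ℝ) = q := by
    simp only [hp1]
    calc ∑ s : ↥S, (if (s : Fin d → ℝ) ∈ A 1 then w1 ↑s else 0) • (s : Fin d → ℝ)
        = ∑ s : ↥S, (if (s : Fin d → ℝ) ∈ A 1 then w1 ↑s • (s : Fin d → ℝ) else 0) := by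
          refine Finset.sum_congr rfl fun s _ => ?_
          split <;> simp
      _ = ∑ x ∈ A 1, w1 x • x := sum_subtype_ite S (A 1) (hAS 1) (fun x => w1 x • x)
      _ = q := hq1
  have hker : radonMap d S w = 0 := by
    have e1 : ∑ s : ↥S, w s = 0 := by
      simp only [hwdef]
      rw [Finset.sum_sub_distrib, hS0, hS1, sub_self]
    have e2 : ∑ s : ↥S, w s • (s : Fin d → ℝ) = 0 := by
      simp only [hwdef, sub_smul]
      rw [Finset.sum_sub_distrib, hV0, hV1, sub_self]
    have hrm : radonMap d S w = (∑ s, w s • (s : Fin d → ℝ), ∑ s, w s) := rfl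
    rw [hrm, e1, e2]
    rfl
  have hd01 : Disjoint (A 0) (A 1) := hdisj 0 1 (by decide)
  have hwne : w ≠ 0 := by
    intro h
    have hzero : ∀ x ∈ A 0, w0 x = 0 := by
      intro x hx
      have hxS : x ∈ S := hAS 0 hx
      have hfx := congrFun h ⟨x, hxS⟩
      have hx1 : x ∉ A 1 := Finset.disjoint_left.mp hd01 hx
      simp only [hwdef, hp0, hp1, Pi.zero_apply, if_pos hx, if_neg hx1, sub_zero] at hfx
      exact hfx
    have hone : (1 : ℝ) = 0 := by rw [← hw0s]; exact Finset.sum_eq_zero hzero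
    exact one_ne_zero hone
  have hmaxw : ∀ s : ↥S, max (w s) 0 = p0 ↑s := by
    intro s
    by_cases hx : (s : Fin d → ℝ) ∈ A 0
    · have hx1 : (s : Fin d → ℝ) ∉ A 1 := Finset.disjoint_left.mp hd01 hx
      have hws : w s = w0 ↑s := by simp [hwdef, hp0, hp1, hx, hx1]
      rw [hws]
      simp only [hp0, if_pos hx]
      exact max_eq_left (hw0n _ hx)
    · have hws : w s = -p1 ↑s := by simp [hwdef, hp0, hx]
      have hp1n : 0 ≤ p1 ↑s := by
        simp only [hp1]
        split
        · exact hw1n _ (by assumption)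
        · exact le_rfl
      rw [hws]
      simp only [hp0, if_neg hx]
      exact max_eq_right (neg_nonpos.mpr hp1n)
  have hrp : radonPt d S w = q := by
    rw [radonPt]
    simp only [hmaxw]
    rw [hS0, hV0, inv_one, one_smul]
  exact ⟨w, hker, hwne, hrp⟩

lemma tverSet_isConnected (hcard : d + 3 ≤ S.card) :
    IsConnected (TverSet 2 S) := by
  classical
  set K := LinearMap.ker (radonMap d S) with hK
  have hfinrank : 2 ≤ Module.finrank ℝ ↥K := by
    have h1 : Module.finrank ℝ (↥S → ℝ) = S.card := by
      rw [Module.finrank_fintype_fun_eq_card, Fintype.card_coe]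
    have h2 := LinearMap.finrank_range_add_finrank_ker (radonMap d S)
    have h3 : Module.finrank ℝ ↥(LinearMap.range (radonMap d S)) ≤ d + 1 := by
      have h4 := Submodule.finrank_le (LinearMap.range (radonMap d S))
      have h5 : Module.finrank ℝ ((Fin d → ℝ) × ℝ) = d + 1 := by
        rw [Module.finrank_prod, Module.finrank_fintype_fun_eq_card, Fintype.card_fin,
          Module.finrank_self]
      omega
    rw [h1] at h2
    rw [hK]
    omega
  have hrank : 1 < Module.rank ℝ ↥K := by
    have hle : ((2 : ℕ) : Cardinal) ≤ (Module.finrank ℝ ↥K : Cardinal) := by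
      exact_mod_cast hfinrank
    have heq : ((Module.finrank ℝ ↥K : ℕ) : Cardinal) = Module.rank ℝ ↥K :=
      Module.finrank_eq_rank ℝ ↥K
    rw [heq] at hle
    refine lt_of_lt_of_le ?_ hle
    exact_mod_cast (by norm_num : (1 : ℕ) < 2)
  have hpc : IsPathConnected ({(0 : ↥K)}ᶜ) :=
    isPathConnected_compl_singleton_of_one_lt_rank hrank 0
  have hden : Continuous fun v : ↥S → ℝ => ∑ s, max (v s) 0 :=
    continuous_finset_sum _ (fun s _ => ((continuous_apply s).max continuous_const))
  have hnum : Continuous fun v : ↥S → ℝ => ∑ s, max (v s) 0 • (s : Fin d → ℝ) :=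
    continuous_finset_sum _
      (fun s _ => ((continuous_apply s).max continuous_const).smul continuous_const)
  have hval : Continuous (fun w : ↥K => (w : ↥S → ℝ)) := continuous_subtype_val
  have hcont : ContinuousOn (fun w : ↥K => radonPt d S ↑w) ({0}ᶜ) := by
    simp only [radonPt]
    apply ContinuousOn.fun_smul
    · apply ContinuousOn.inv₀
      · exact (hden.comp hval).continuousOn
      · intro w hw
        have hker := LinearMap.mem_ker.mp w.2
        have hsum : ∑ s, (w : ↥S → ℝ) s = 0 := congrArg Prod.snd hker
        have hne : (w : ↥S → ℝ) ≠ 0 := by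
          intro h
          exact hw (Set.mem_singleton_iff.mpr (Subtype.ext h))
        exact (radon_den_pos _ hsum hne).ne'
    · exact (hnum.comp hval).continuousOn
  have himg : TverSet 2 S = (fun w : ↥K => radonPt d S ↑w) '' ({0}ᶜ) := by
    ext q
    constructor
    · intro hq
      obtain ⟨w, hker, hwne, hrp⟩ := tverSet_eq_radonPt hq
      refine ⟨⟨w, LinearMap.mem_ker.mpr hker⟩, ?_, hrp⟩
      simp only [Set.mem_compl_iff, Set.mem_singleton_iff]
      intro h
      exact hwne (congrArg Subtype.val h)
    · rintro ⟨w, hw, rfl⟩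
      have hwne : (w : ↥S → ℝ) ≠ 0 := by
        intro h
        exact hw (Set.mem_singleton_iff.mpr (Subtype.ext h))
      exact radonPt_mem_tverSet _ (LinearMap.mem_ker.mp w.2) hwne
  rw [himg]
  exact hpc.isConnected.image _ hcont

theorem radon_set_singleton
    (d : ℕ) (hd : 0 < d) (S : Finset (Fin d → ℝ))
    (hcard : d + 3 ≤ S.card)
    (hspan : affineSpan ℝ (S : Set (Fin d → ℝ)) = ⊤)
    (hdim : CovDimLE ↥(TverSet 2 S) 0) :
    ∃! p : Fin d → ℝ, TverSet 2 S = {p} := by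
  classical
  have hconn : IsConnected (TverSet 2 S) := tverSet_isConnected hcard
  haveI : ConnectedSpace ↥(TverSet 2 S) := Subtype.connectedSpace hconn
  have hsub : ∀ a b : ↥(TverSet 2 S), a = b := by
    intro a b
    by_contra hab
    have hopen : ∀ U ∈ ({({a}ᶜ : Set ↥(TverSet 2 S)), ({b}ᶜ : Set ↥(TverSet 2 S))} : Finset (Set ↥(TverSet 2 S))), IsOpen U := by
      intro U hU
      rw [Finset.mem_insert, Finset.mem_singleton] at hU
      rcases hU with rfl | rfl <;> exact isOpen_compl_singleton
    have hcover : ⋃₀ ((({({a}ᶜ : Set ↥(TverSet 2 S)), ({b}ᶜ : Set ↥(TverSet 2 S))} : Finset (Set ↥(TverSet 2 S)))) : Set (Set ↥(TverSet 2 S)))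
        = Set.univ := by
      ext x
      simp only [Finset.coe_insert, Finset.coe_singleton, Set.sUnion_insert,
        Set.sUnion_singleton, Set.mem_union, Set.mem_compl_iff, Set.mem_singleton_iff,
        Set.mem_univ, iff_true]
      by_contra h
      push_neg at h
      exact hab (h.1.symm.trans h.2)
    obtain ⟨𝒱, hVopen, hVcover, hVref, hVdisj⟩ := hdim _ hopen hcover
    have haV : ∃ V ∈ 𝒱, a ∈ V := by
      have : a ∈ ⋃₀ (𝒱 : Set (Set ↥(TverSet 2 S))) := hVcover ▸ Set.mem_univ a
      simpa using this
    obtain ⟨V, hV𝒱, haV⟩ := haV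
    have hVcompl : Vᶜ = ⋃₀ ((𝒱 : Set (Set ↥(TverSet 2 S))) \ {V}) := by
      apply Set.eq_of_subset_of_subset
      · intro x hx
        have hx' : x ∈ ⋃₀ (𝒱 : Set (Set ↥(TverSet 2 S))) := hVcover ▸ Set.mem_univ x
        obtain ⟨W, hW, hxW⟩ := hx'
        refine ⟨W, ⟨hW, ?_⟩, hxW⟩
        intro hWV
        rw [Set.mem_singleton_iff] at hWV
        exact hx (hWV ▸ hxW)
      · rintro x ⟨W, ⟨hW𝒱, hWV⟩, hxW⟩
        rw [Set.mem_singleton_iff] at hWV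
        intro hxV
        have hcard2 : ({V, W} : Finset (Set ↥(TverSet 2 S))).card = 2 := Finset.card_pair (Ne.symm hWV)
        have hsub' : ({V, W} : Finset (Set ↥(TverSet 2 S))) ⊆ 𝒱 := by
          intro Y hY
          rw [Finset.mem_insert, Finset.mem_singleton] at hY
          rcases hY with rfl | rfl
          · exact hV𝒱
          · exact Finset.mem_coe.mp hW𝒱
        have hempty := hVdisj {V, W} hsub' (by rw [hcard2])
        have hmem : x ∈ ⋂₀ (({V, W} : Finset (Set ↥(TverSet 2 S))) : Set (Set ↥(TverSet 2 S))) := by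
          intro Y hY
          simp only [Finset.coe_insert, Finset.coe_singleton, Set.mem_insert_iff,
            Set.mem_singleton_iff] at hY
          rcases hY with rfl | rfl
          · exact hxV
          · exact hxW
        rw [hempty] at hmem
        exact hmem
    have hVclosed : IsClosed V := by
      rw [← isOpen_compl_iff, hVcompl]
      exact isOpen_sUnion (fun W hW => hVopen W (Finset.mem_coe.mp hW.1))
    have hVuniv : V = Set.univ := by
      rcases isClopen_iff.mp ⟨hVclosed, hVopen V hV𝒱⟩ with h | h
      · exact absurd (h ▸ haV) (Set.notMem_empty a)
      · exact h
    obtain ⟨U, hU𝒰, hVU⟩ := hVref V hV𝒱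
    rw [Finset.mem_insert, Finset.mem_singleton] at hU𝒰
    rcases hU𝒰 with rfl | rfl
    · exact hVU haV rfl
    · exact hVU (hVuniv ▸ Set.mem_univ b) rfl
  obtain ⟨p, hp⟩ := hconn.nonempty
  refine ⟨p, ?_, ?_⟩
  · ext x
    simp only [Set.mem_singleton_iff]
    constructor
    · intro hx
      exact congrArg Subtype.val (hsub ⟨x, hx⟩ ⟨p, hp⟩)
    · rintro rfl
      exact hp
  · intro y hy
    have hpy : p ∈ ({y} : Set (Fin d → ℝ)) := hy ▸ hp
    exact (Set.mem_singleton_iff.mp hpy).symm
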